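/- For every n ≥ 1, every j with 0 ≤ j ≤ n−1, and every k with C(j+1,2) ≤ k ≤ nj − C(j+1,2), there exists a permutation π of [n] with exactly j descents and maj(π) = k. -/

import Mathlib

/-- A permutation: a list of distinct positive integers. -/
def IsPerm (π : List ℕ) : Prop := π.Nodup ∧ ∀ x ∈ π, 0 < x

/-- The descent set (1-indexed): `i ∈ [n-1]` with `π_i > π_{i+1}`. -/
def desSet (π : List ℕ) : Finset ℕ :=
  (Finset.Icc 1 (π.length - 1)).filter (fun i => π.getD i 0 < π.getD (i-1) 0)

/-- Number of descents. -/
def des (π : List ℕ) : ℕ := (desSet π).card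

/-- Major index: sum of descent positions. -/
def maj (π : List ℕ) : ℕ := ∑ i ∈ desSet π, i

/-- Number of peaks: `2 ≤ i ≤ n-1` with `π_{i-1} < π_i > π_{i+1}` (1-indexed). -/
def pk (π : List ℕ) : ℕ :=
  ((Finset.Icc 2 (π.length - 1)).filter (fun i =>
    π.getD (i-2) 0 < π.getD (i-1) 0 ∧ π.getD i 0 < π.getD (i-1) 0)).card

/-- Number of valleys: `2 ≤ i ≤ n-1` with `π_{i-1} > π_i < π_{i+1}` (1-indexed). -/
def valley (π : List ℕ) : ℕ :=
  ((Finset.Icc 2 (π.length - 1)).filter (fun i =>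
    π.getD (i-1) 0 < π.getD (i-2) 0 ∧ π.getD (i-1) 0 < π.getD i 0)).card

/-- The left peak set: `i ∈ [n-1]` with `π_{i-1} < π_i > π_{i+1}`, where `π_0 := 0`. -/
def lpkSet (π : List ℕ) : Finset ℕ :=
  (Finset.Icc 1 (π.length - 1)).filter (fun i =>
    (0 :: π).getD (i-1) 0 < (0 :: π).getD i 0 ∧ (0 :: π).getD (i+1) 0 < (0 :: π).getD i 0)

/-- Number of left peaks. -/
def lpk (π : List ℕ) : ℕ := (lpkSet π).card

/-- Number of biruns (maximal monotone consecutive subsequences):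
one more than the number of direction changes, for lists with at least 2 letters. -/
def br (π : List ℕ) : ℕ :=
  if π.length ≤ 1 then π.length
  else 1 + ((Finset.Icc 2 (π.length - 1)).filter (fun i =>
      (π.getD (i-2) 0 < π.getD (i-1) 0 ↔ π.getD i 0 < π.getD (i-1) 0))).card

/-- Number of up-down runs: the biruns, together with `π_1` when `π_1 > π_2`. -/
def udr (π : List ℕ) : ℕ :=
  br π + (if 2 ≤ π.length ∧ π.getD 1 0 < π.getD 0 0 then 1 else 0)

/-- The maximal increasing runs of a list. -/
def incRuns : List ℕ → List (List ℕ)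
  | [] => []
  | [a] => [[a]]
  | a :: b :: l =>
    match incRuns (b :: l) with
    | [] => [[a]]
    | r :: rs => if a < b then (a :: r) :: rs else [a] :: r :: rs

/-- Number of long runs (maximal increasing runs of length at least 2). -/
def lr (π : List ℕ) : ℕ := ((incRuns π).filter (fun r => 2 ≤ r.length)).length

/-- `1` if the initial run is long, `0` otherwise. -/
def lir (π : List ℕ) : ℕ := if 2 ≤ ((incRuns π).headD []).length then 1 else 0

/-- `1` if the final run is long, `0` otherwise. -/
def lfr (π : List ℕ) : ℕ := if 2 ≤ ((incRuns π).getLastD []).length then 1 else 0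

/-- The descent composition: the lengths of the maximal increasing runs. -/
def descComp (π : List ℕ) : List ℕ := (incRuns π).map List.length

/-- `τ` is a shuffle of `π` and `σ`: a permutation of length `|π| + |σ|`
containing both `π` and `σ` as subsequences. -/
def IsShuffle (π σ τ : List ℕ) : Prop :=
  τ.length = π.length + σ.length ∧ IsPerm τ ∧ π.Sublist τ ∧ σ.Sublist τ

open Classical in
/-- The finite set of shuffles of `π` and `σ`. -/
noncomputable def shuffles (π σ : List ℕ) : Finset (List ℕ) :=
  (π ++ σ).permutations.toFinset.filter (fun τ => IsShuffle π σ τ)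

/-- `J` is a refinement of `M` in the refinement order on weak compositions
(where `M` covers `L` when `M` is obtained from `L` by replacing two consecutive
parts by their sum): `M` is obtained by summing consecutive nonempty blocks of `J`. -/
def Refines (J M : List ℕ) : Prop :=
  ∃ P : List (List ℕ), P.flatten = J ∧ P.map List.sum = M ∧ ∀ b ∈ P, b ≠ []

/-- Successive differences, starting from `prev`. -/
def diffList : ℕ → List ℕ → List ℕ
  | _, [] => []
  | prev, a :: rest => (a - prev) :: diffList a rest

/-- `Comp(A)`: the composition of `N` determined by `A = {a₁ < ⋯ < a_j} ⊆ [N-1]`,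
namely `(a₁, a₂ - a₁, …, N - a_j)`. -/
def compOfSet (N : ℕ) (A : Finset ℕ) : List ℕ :=
  diffList 0 ((A.sort (· ≤ ·)) ++ [N])

/-- The `q`-factorial `[n]_q! = (1)(1+q)⋯(1+q+⋯+q^{n-1})`. -/
noncomputable def qFact (q : RatFunc ℚ) (n : ℕ) : RatFunc ℚ :=
  ∏ j ∈ Finset.range n, ∑ i ∈ Finset.range (j+1), q ^ i

/-- The `q`-binomial coefficient `[n choose k]_q`. -/
noncomputable def qBinom (q : RatFunc ℚ) (n k : ℕ) : RatFunc ℚ :=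
  qFact q n / (qFact q k * qFact q (n - k))

def build : ℕ → List ℕ → List ℕ
  | _, [] => []
  | m, c :: cs => List.range' (m + 1 - c) c ++ build (m - c) cs

def majComp : List ℕ → ℕ
  | [] => 0
  | c :: cs => majComp cs + c * cs.length

lemma build_length (m : ℕ) (cs : List ℕ) : (build m cs).length = cs.sum := by
  induction cs generalizing m with
  | nil => rfl
  | cons c cs ih => simp [build, ih]

lemma build_mem_le {m x : ℕ} {cs : List ℕ} (hs : cs.sum ≤ m) (hx : x ∈ build m cs) : x ≤ m := by
  induction cs generalizing m with
  | nil => simp [build] at hx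
  | cons c cs ih =>
    simp only [build, List.mem_append, List.mem_range'_1] at hx
    simp only [List.sum_cons] at hs
    rcases hx with ⟨h1, h2⟩ | h
    · omega
    · exact le_trans (ih (by omega) h) (by omega)

lemma build_perm (m : ℕ) (cs : List ℕ) (h : cs.sum ≤ m) :
    (build m cs).Perm (List.range' (m + 1 - cs.sum) cs.sum) := by
  induction cs generalizing m with
  | nil => simp [build]
  | cons c cs ih =>
    simp only [build, List.sum_cons]
    have h1 : cs.sum ≤ m - c := by simp at h; omega
    have := (ih (m - c) h1).append_left (List.range' (m + 1 - c) c)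
    refine this.trans ?_
    have := (List.perm_append_comm (l₁ := List.range' (m + 1 - c) c)
      (l₂ := List.range' (m - c + 1 - cs.sum) cs.sum))
    refine this.trans ?_
    have heq : List.range' (m - c + 1 - cs.sum) cs.sum ++ List.range' (m + 1 - c) c
        = List.range' (m + 1 - (c + cs.sum)) (c + cs.sum) := by
      have e1 : m - c + 1 - cs.sum = m + 1 - (c + cs.sum) := by simp at h; omega
      have e2 : m + 1 - c = (m + 1 - (c + cs.sum)) + 1 * cs.sum := by simp at h; omega
      rw [e1, e2, List.range'_append, Nat.add_comm cs.sum c]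
    rw [heq]

lemma desSet_append (s c : ℕ) (R : List ℕ) (hc : 1 ≤ c) (hR : ∀ x ∈ R, x < s) :
    desSet (List.range' s c ++ R) =
      (desSet R).image (· + c) ∪ (if R = [] then ∅ else {c}) := by
  have hlen : (List.range' s c ++ R).length = c + R.length := by simp [Nat.add_comm]
  have hgetA : ∀ i < c, (List.range' s c ++ R).getD i 0 = s + i := by
    intro i hi
    rw [List.getD_append _ _ _ _ (by simpa using hi), List.getD_eq_getElem _ _ (by simpa using hi),
      List.getElem_range']
    ring
  have hgetR : ∀ i, c ≤ i → (List.range' s c ++ R).getD i 0 = R.getD (i - c) 0 := by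
    intro i hi
    rw [List.getD_append_right _ _ _ _ (by simpa using hi)]
    simp
  ext i
  simp only [desSet, Finset.mem_filter, Finset.mem_Icc, Finset.mem_union, Finset.mem_image,
    hlen]
  constructor
  · rintro ⟨⟨hi1, hi2⟩, hlt⟩
    rcases lt_trichotomy i c with h | h | h
    · exfalso
      rw [hgetA i h, hgetA (i-1) (by omega)] at hlt
      omega
    · subst h
      have hRne : R ≠ [] := by
        intro hR0; rw [hR0] at hi2; simp at hi2; omega
      right; rw [if_neg hRne]; exact Finset.mem_singleton_self _
    · left
      refine ⟨i - c, ⟨⟨by omega, ?_⟩, ?_⟩, by omega⟩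
      · have : R.length ≠ 0 := by omega
        omega
      · rw [hgetR i (by omega), hgetR (i-1) (by omega)] at hlt
        have e : i - 1 - c = i - c - 1 := by omega
        rwa [e] at hlt
  · rintro (⟨x, ⟨⟨hx1, hx2⟩, hlt⟩, rfl⟩ | hi)
    · have hRlen : 1 ≤ R.length := by omega
      refine ⟨⟨by omega, by omega⟩, ?_⟩
      rw [hgetR (x + c) (by omega), hgetR (x + c - 1) (by omega)]
      have e1 : x + c - c = x := by omega
      have e2 : x + c - 1 - c = x - 1 := by omega
      rw [e1, e2]; exact hlt
    · rcases eq_or_ne R [] with hRe | hRe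
      · simp [hRe] at hi
      · rw [if_neg hRe] at hi
        have hi' : i = c := Finset.mem_singleton.mp hi
        subst hi'
        have hRlen : 1 ≤ R.length := List.length_pos_iff.mpr hRe
        refine ⟨⟨by omega, by omega⟩, ?_⟩
        rw [hgetR i (le_refl i), hgetA (i-1) (by omega)]
        simp only [Nat.sub_self]
        have hhead : R.getD 0 0 ∈ R := by
          rw [List.getD_eq_getElem _ _ (by omega)]
          exact List.getElem_mem _
        have := hR _ hhead
        omega

lemma build_spec (cs : List ℕ) (m : ℕ) (hpos : ∀ x ∈ cs, 1 ≤ x) (hsum : cs.sum ≤ m) :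
    des (build m cs) = cs.length - 1 ∧ maj (build m cs) = majComp cs := by
  induction cs generalizing m with
  | nil => simp [build, des, maj, desSet, majComp]
  | cons c cs ih =>
    have hc : 1 ≤ c := hpos c (by simp)
    have hsum' : cs.sum ≤ m - c := by simp at hsum; omega
    have hcm : c ≤ m := by simp at hsum; omega
    obtain ⟨ihd, ihm⟩ := ih (m - c) (fun x hx => hpos x (by simp [hx])) hsum'
    set R := build (m - c) cs with hRdef
    have hR : ∀ x ∈ R, x < m + 1 - c := fun x hx => by
      have := build_mem_le hsum' (hRdef ▸ hx); omega
    have hds := desSet_append (m + 1 - c) c R hc hR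
    have hb : build m (c :: cs) = List.range' (m + 1 - c) c ++ R := rfl
    have hdisj : Disjoint ((desSet R).image (· + c))
        (if R = [] then (∅ : Finset ℕ) else {c}) := by
      split
      · simp
      · simp only [Finset.disjoint_singleton_right, Finset.mem_image]
        rintro ⟨x, hx, hxc⟩
        simp only [desSet, Finset.mem_filter, Finset.mem_Icc] at hx
        omega
    have hinj : Set.InjOn (· + c) (desSet R) := fun a _ b _ h => by simpa using h
    have h0 : desSet ([] : List ℕ) = ∅ := by simp [desSet]
    rcases eq_or_ne cs [] with rfl | hne
    · have hRnil : R = [] := by rw [hRdef]; rfl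
      constructor
      · rw [des, hb, hds, hRnil, if_pos rfl, h0]; simp [majComp]
      · rw [maj, hb, hds, hRnil, if_pos rfl, h0]; simp [majComp]
    · have hRne : R ≠ [] := by
        intro h
        have hl := build_length (m - c) cs
        rw [← hRdef, h] at hl
        have : cs.sum ≠ 0 := by
          rcases cs with _ | ⟨c', cs'⟩
          · exact absurd rfl hne
          · have := hpos c' (by simp)
            simp; omega
        simp at hl; omega
      rw [if_neg hRne] at hds
      rw [if_neg hRne] at hdisj
      have hlcs : 1 ≤ cs.length := List.length_pos_iff.mpr hne
      constructor
      · rw [des, hb, hds, Finset.card_union_of_disjoint hdisj,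
          Finset.card_image_of_injOn hinj, Finset.card_singleton]
        show des R + 1 = _
        rw [ihd]
        simp only [List.length_cons]
        omega
      · rw [maj, hb, hds, Finset.sum_union hdisj,
          Finset.sum_image (fun a ha b hb h => hinj ha hb h), Finset.sum_singleton]
        simp only [Finset.sum_add_distrib, Finset.sum_const, smul_eq_mul]
        show maj R + des R * c + c = majComp (c :: cs)
        rw [ihm, ihd, majComp]
        obtain ⟨k, hk⟩ := Nat.exists_eq_succ_of_ne_zero (by omega : cs.length ≠ 0)
        rw [hk]
        simp only [Nat.succ_sub_one, Nat.succ_eq_add_one]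
        ring

lemma choose_succ_two (x : ℕ) : Nat.choose (x+1) 2 = Nat.choose x 2 + x := by
  rw [Nat.choose_succ_succ, Nat.choose_one_right]; exact Nat.add_comm x (x.choose 2)

lemma two_mul_choose_two (x : ℕ) : 2 * Nat.choose (x+1) 2 = x * (x+1) := by
  induction x with
  | zero => rfl
  | succ s ih =>
    rw [choose_succ_two (s+1), Nat.mul_add, ih]
    ring

lemma choose_two_add (x y : ℕ) : Nat.choose (x + y) 2 = Nat.choose x 2 + Nat.choose y 2 + x * y := by
  induction y with
  | zero => simp
  | succ s ih =>
    have e : x + (s + 1) = (x + s) + 1 := by ring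
    rw [e, choose_succ_two, ih, choose_succ_two]
    ring

lemma majComp_append (X Y : List ℕ) :
    majComp (X ++ Y) = majComp X + X.sum * Y.length + majComp Y := by
  induction X with
  | nil => simp [majComp]
  | cons x X ih =>
    simp only [List.cons_append, majComp, List.append_eq, List.length_append, List.sum_cons]
    rw [ih]
    ring

lemma majComp_replicate_one (b : ℕ) : majComp (List.replicate b 1) = Nat.choose b 2 := by
  induction b with
  | zero => simp [majComp]
  | succ s ih =>
    rw [List.replicate_succ, majComp, ih, List.length_replicate, choose_succ_two]
    ring

lemma key_arith (a b t s : ℕ) :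
    Nat.choose b 2 + b * (a + 2) + ((t+1) + ((t+1)+(s+1)) * a + Nat.choose a 2)
      = Nat.choose (a + (b + 2)) 2 + a * (t + s) + t := by
  rw [choose_two_add a (b+2), show b + 2 = (b+1)+1 from rfl, choose_succ_two (b+1),
    choose_succ_two b]
  ring

lemma comp_exists (n j k : ℕ) (hn : 1 ≤ n) (hj : j ≤ n - 1)
    (hk1 : Nat.choose (j+1) 2 ≤ k) (hk2 : k ≤ n * j - Nat.choose (j+1) 2) :
    ∃ cs : List ℕ, (∀ x ∈ cs, 1 ≤ x) ∧ cs.sum = n ∧ cs.length = j + 1 ∧ majComp cs = k := by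
  rcases Nat.eq_zero_or_pos j with rfl | hj1
  · have hC : Nat.choose (0+1) 2 = 0 := rfl
    have hk0 : k = 0 := by rw [hC] at hk2; omega
    exact ⟨[n], by intro x hx; simp at hx; omega, by simp, by simp, by simp [majComp, hk0]⟩
  · obtain ⟨j', rfl⟩ : ∃ j', j = j' + 1 := ⟨j - 1, by omega⟩
    have hjn : j' + 2 ≤ n := by omega
    obtain ⟨M, hMdef⟩ : ∃ M, M = n - 1 - (j' + 1) := ⟨_, rfl⟩
    have hn' : n = M + j' + 2 := by omega
    obtain ⟨C, hCdef⟩ : ∃ C, C = Nat.choose (j' + 1 + 1) 2 := ⟨_, rfl⟩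
    rw [← hCdef] at hk1 hk2
    have h2C : 2 * C = (j' + 1) * (j' + 2) := by
      rw [hCdef]; exact two_mul_choose_two (j' + 1)
    obtain ⟨r, hrdef⟩ : ∃ r, r = k - C := ⟨_, rfl⟩
    have hkC : C + r = k := by omega
    have hrM : r ≤ (j' + 1) * M := by
      have e : n * (j' + 1) = 2 * C + (j' + 1) * M := by
        rw [h2C, hn']; ring
      omega
    obtain ⟨a, hadef⟩ : ∃ a, a = min (r / M) j' := ⟨_, rfl⟩
    obtain ⟨t, htdef⟩ : ∃ t, t = r - a * M := ⟨_, rfl⟩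
    have haj : a ≤ j' := by rw [hadef]; exact min_le_right _ _
    have haM : a * M ≤ r := by
      rw [hadef]
      calc min (r / M) j' * M ≤ (r / M) * M := Nat.mul_le_mul_right M (min_le_left _ _)
        _ ≤ r := Nat.div_mul_le_self r M
    have htM : t ≤ M := by
      rcases le_or_gt (r / M) j' with h | h
      · have ha' : a = r / M := by rw [hadef]; exact min_eq_left h
        have hdm := Nat.div_add_mod r M
        have hcomm : M * (r / M) = (r / M) * M := Nat.mul_comm _ _
        have ha2 : a * M = (r / M) * M := by rw [ha']
        rcases Nat.eq_zero_or_pos M with hM0 | hM0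
        · have h0 : r = 0 := by
            rw [hM0] at hrM; simp at hrM; exact hrM
          omega
        · have hmod : r % M < M := Nat.mod_lt _ hM0
          omega
      · have hM0 : 0 < M := by
          by_contra h0
          push_neg at h0
          interval_cases M
          simp [Nat.div_zero] at h
        have ha' : a = j' := by rw [hadef]; exact min_eq_right (le_of_lt h)
        have hge : (j' + 1) * M ≤ r := by
          calc (j' + 1) * M ≤ (r / M) * M := Nat.mul_le_mul_right M (by omega)
            _ ≤ r := Nat.div_mul_le_self r M
        have hb1 : (j' + 1) * M = j' * M + M := by ring
        have ha2 : a * M = j' * M := by rw [ha']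
        omega
    obtain ⟨b, hbdef⟩ : ∃ b, b = j' - a := ⟨_, rfl⟩
    have hab : j' = a + b := by omega
    refine ⟨List.replicate b 1 ++ ([t + 1, (M - t) + 1] ++ List.replicate a 1), ?_, ?_, ?_, ?_⟩
    · intro x hx
      rcases List.mem_append.mp hx with h | h
      · rw [List.eq_of_mem_replicate h]
      · rcases List.mem_append.mp h with h | h
        · simp only [List.mem_cons, List.not_mem_nil, or_false] at h
          omega
        · rw [List.eq_of_mem_replicate h]
    · simp only [List.sum_append, List.sum_replicate, List.sum_cons, List.sum_nil, smul_eq_mul]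
      omega
    · simp only [List.length_append, List.length_replicate, List.length_cons, List.length_nil]
      omega
    · rw [majComp_append, majComp_append]
      simp only [List.sum_replicate, List.sum_append, List.length_append, List.length_cons,
        List.length_nil, List.length_replicate, smul_eq_mul, majComp_replicate_one,
        List.sum_cons, List.sum_nil]
      have hmc : majComp [t + 1, (M - t) + 1] = t + 1 := by simp [majComp]
      rw [hmc]
      have hts : t + (M - t) = M := by omega
      have hka := key_arith a b t (M - t)
      rw [hts] at hka
      have hC2 : C = Nat.choose (a + (b + 2)) 2 := by
        rw [hCdef]; congr 1; omega
      have haMt : a * M + t = r := by omega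
      have goal2 : Nat.choose b 2 + b * (a + 2) + ((t + 1) + ((t + 1) + ((M - t) + 1)) * a + Nat.choose a 2) = k := by
        rw [hka, ← hC2]
        omega
      calc Nat.choose b 2 + b * 1 * (0 + 1 + 1 + a) + (t + 1 + (t + 1 + ((M - t) + 1 + 0)) * a + Nat.choose a 2)
          = Nat.choose b 2 + b * (a + 2) + ((t + 1) + ((t + 1) + ((M - t) + 1)) * a + Nat.choose a 2) := by ring
        _ = k := goal2

theorem exists_perm_des_maj (n j k : ℕ) (hn : 1 ≤ n) (hj : j ≤ n - 1)
    (hk1 : Nat.choose (j+1) 2 ≤ k) (hk2 : k ≤ n * j - Nat.choose (j+1) 2) :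
    ∃ π : List ℕ, π.Perm (List.range' 1 n) ∧ des π = j ∧ maj π = k := by
  obtain ⟨cs, hpos, hsum, hlen, hmaj⟩ := comp_exists n j k hn hj hk1 hk2
  obtain ⟨hdes, hmaj'⟩ := build_spec cs n hpos (le_of_eq hsum)
  refine ⟨build n cs, ?_, ?_, ?_⟩
  · have h := build_perm n cs (le_of_eq hsum)
    rw [hsum, show n + 1 - n = 1 by omega] at h
    exact h
  · rw [hdes, hlen]
    omega
  · rw [hmaj', hmaj]
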